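/- Let U ∈ ℝ^{n×r}, let P be an orthogonal projection matrix in ℝ^{r×r} of rank k > 0, and consider l(B) = −n·log det₀(B) − tr(U B† Uᵀ) over the set of positive semidefinite matrices B with column space equal to range(P). Assuming P Uᵀ U P restricted to range(P) is positive definite, the maximizer is B* = n⁻¹ P Uᵀ U P, and the maximum value is nk·log n − nk − n·log det₀(P Uᵀ U P). -/

import Mathlib

open Matrix

/-- `IsMoorePenrose A B` states that `B` is the Moore–Penrose pseudoinverse of `A`. -/
def IsMoorePenrose {m n : Type*} [Fintype m] [Fintype n]
    (A : Matrix m n ℝ) (B : Matrix n m ℝ) : Prop :=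
  A * B * A = A ∧ B * A * B = B ∧ (A * B)ᵀ = A * B ∧ (B * A)ᵀ = B * A

/- The Moore–Penrose pseudoinverse of a real square matrix (defined by choice;
it always exists and is unique). -/
open Classical in
noncomputable def pinv {r : ℕ} (M : Matrix (Fin r) (Fin r) ℝ) : Matrix (Fin r) (Fin r) ℝ :=
  if h : ∃ B, IsMoorePenrose M B then h.choose else 0

/-- `det0 M` is the product of the nonzero eigenvalues of a symmetric matrix `M`
(junk value 0 if `M` is not Hermitian). -/
noncomputable def det0 {r : ℕ} (M : Matrix (Fin r) (Fin r) ℝ) : ℝ :=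
  if h : M.IsHermitian then
    ∏ i : Fin r, if h.eigenvalues i = 0 then 1 else h.eigenvalues i
  else 0

theorem mp_unique {m n : Type*} [Fintype m] [Fintype n]
    {A : Matrix m n ℝ} {B C : Matrix n m ℝ}
    (hB : IsMoorePenrose A B) (hC : IsMoorePenrose A C) : B = C := by
  obtain ⟨hB1, hB2, hB3, hB4⟩ := hB
  obtain ⟨hC1, hC2, hC3, hC4⟩ := hC
  have h1 : A * B = A * C := by
    calc A * B = (A * B)ᵀ := hB3.symm
    _ = (A * C * A * B)ᵀ := by rw [hC1]
    _ = (A * B)ᵀ * (A * C)ᵀ := by simp only [transpose_mul, Matrix.mul_assoc]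
    _ = A * B * (A * C) := by rw [hB3, hC3]
    _ = A * C := by rw [← Matrix.mul_assoc, hB1]
  have h2 : B * A = C * A := by
    calc B * A = (B * A)ᵀ := hB4.symm
    _ = (B * (A * C * A))ᵀ := by rw [hC1]
    _ = (C * A)ᵀ * (B * A)ᵀ := by simp only [transpose_mul, Matrix.mul_assoc]
    _ = C * A * (B * A) := by rw [hB4, hC4]
    _ = C * A := by rw [Matrix.mul_assoc, ← Matrix.mul_assoc A B A, hB1]
  calc B = B * A * B := hB2.symm
  _ = C * A * C := by rw [Matrix.mul_assoc, h1, ← Matrix.mul_assoc, h2]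
  _ = C := hC2


theorem pinv_eq {r : ℕ} {M B : Matrix (Fin r) (Fin r) ℝ} (h : IsMoorePenrose M B) :
    pinv M = B := by
  have hex : ∃ B, IsMoorePenrose M B := ⟨B, h⟩
  rw [pinv, dif_pos hex]
  exact mp_unique hex.choose_spec h

/-- pseudoinverse of V * diagonal d * Vᵀ -/
theorem mp_diag {r : ℕ} {V : Matrix (Fin r) (Fin r) ℝ} (hV : Vᵀ * V = 1) (hV2 : V * Vᵀ = 1)
    (d : Fin r → ℝ) :
    IsMoorePenrose (V * diagonal d * Vᵀ)
      (V * diagonal (fun i => if d i = 0 then 0 else (d i)⁻¹) * Vᵀ) := by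
  set pd : Fin r → ℝ := fun i => if d i = 0 then 0 else (d i)⁻¹ with hpd
  have key : ∀ a b : Fin r → ℝ,
      (V * diagonal a * Vᵀ) * (V * diagonal b * Vᵀ) = V * diagonal (a * b) * Vᵀ := by
    intro a b
    simp only [Matrix.mul_assoc]
    rw [← Matrix.mul_assoc Vᵀ V, hV, Matrix.one_mul, ← Matrix.mul_assoc (diagonal a),
      diagonal_mul_diagonal]
    rfl
  have hsym : ∀ a : Fin r → ℝ, (V * diagonal a * Vᵀ)ᵀ = V * diagonal a * Vᵀ := by
    intro a
    simp [transpose_mul, diagonal_transpose, Matrix.mul_assoc]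
  refine ⟨?_, ?_, ?_, ?_⟩
  · have h1 : d * pd * d = d := by
      funext i
      by_cases h : d i = 0 <;> simp [hpd, h, Pi.mul_apply] <;> field_simp
    rw [key, key, h1]
  · have h1 : pd * d * pd = pd := by
      funext i
      by_cases h : d i = 0 <;> simp [hpd, h, Pi.mul_apply] <;> field_simp
    rw [key, key, h1]
  · rw [key, hsym]
  · rw [key, hsym]

/-- real spectral theorem in convenient form -/
theorem spectral_real {r : ℕ} {A : Matrix (Fin r) (Fin r) ℝ} (hA : A.IsHermitian) :
    ∃ V : Matrix (Fin r) (Fin r) ℝ, Vᵀ * V = 1 ∧ V * Vᵀ = 1 ∧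
      A = V * diagonal hA.eigenvalues * Vᵀ := by
  refine ⟨hA.eigenvectorUnitary, ?_, ?_, ?_⟩
  · have := (Matrix.mem_unitaryGroup_iff').mp hA.eigenvectorUnitary.2
    simpa [star_eq_conjTranspose] using this
  · have := (Matrix.mem_unitaryGroup_iff).mp hA.eigenvectorUnitary.2
    simpa [star_eq_conjTranspose] using this
  · have := hA.spectral_theorem
    simpa [star_eq_conjTranspose, Function.comp] using this

variable {r m : ℕ} {V : Matrix (Fin r) (Fin r) ℝ}

theorem col_dot (hV : Vᵀ * V = 1) (i j : Fin r) :
    Vᵀ i ⬝ᵥ Vᵀ j = if i = j then 1 else 0 := by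
  have := congrFun (congrFun hV i) j
  simpa [Matrix.mul_apply, dotProduct, Matrix.one_apply] using this

theorem mulVec_transpose_col (hV : Vᵀ * V = 1) (i : Fin r) :
    Vᵀ *ᵥ Vᵀ i = Pi.single i 1 := by
  funext j
  have := congrFun (congrFun hV j) i
  simp only [Matrix.mul_apply, Matrix.one_apply, transpose_apply] at this
  simp only [Matrix.mulVec, dotProduct, transpose_apply]
  rw [this, Pi.single_apply]

theorem mulVec_single_col (i : Fin r) :
    V *ᵥ Pi.single i (1:ℝ) = Vᵀ i := by
  funext j
  simp [Matrix.mulVec_single]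

theorem sandwich_mulVec_col (hV : Vᵀ * V = 1) (c : Fin r → ℝ) (i : Fin r) :
    (V * diagonal c * Vᵀ) *ᵥ Vᵀ i = c i • Vᵀ i := by
  rw [← Matrix.mulVec_mulVec, ← Matrix.mulVec_mulVec, mulVec_transpose_col hV,
    Matrix.diagonal_mulVec_single]
  rw [show (Pi.single i (c i * 1) : Fin r → ℝ) = c i • (Pi.single i 1 : Fin r → ℝ) by
    funext j; simp [Pi.single_apply]]
  rw [Matrix.mulVec_smul, mulVec_single_col]

theorem dot_UtU (U : Matrix (Fin m) (Fin r) ℝ) (x : Fin r → ℝ) :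
    x ⬝ᵥ (Uᵀ * U) *ᵥ x = (U *ᵥ x) ⬝ᵥ (U *ᵥ x) := by
  rw [← Matrix.mulVec_mulVec, Matrix.dotProduct_mulVec, Matrix.vecMul_transpose]

theorem quad_form (hV : Vᵀ * V = 1) (c : Fin r → ℝ) (x : Fin r → ℝ) :
    x ⬝ᵥ (V * diagonal c * Vᵀ) *ᵥ x = ∑ j, c j * (Vᵀ j ⬝ᵥ x) ^ 2 := by
  rw [← Matrix.mulVec_mulVec, ← Matrix.mulVec_mulVec]
  rw [show x ⬝ᵥ V *ᵥ (diagonal c *ᵥ (Vᵀ *ᵥ x)) = Vᵀ *ᵥ x ⬝ᵥ (diagonal c *ᵥ (Vᵀ *ᵥ x)) by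
    rw [Matrix.dotProduct_mulVec, ← Matrix.mulVec_transpose]]
  simp only [dotProduct, Matrix.mulVec_diagonal]
  refine Finset.sum_congr rfl fun j _ => ?_
  have h : (Vᵀ *ᵥ x) j = Vᵀ j ⬝ᵥ x := rfl
  rw [h]; simp only [dotProduct]; ring

theorem trace_sandwich (U : Matrix (Fin m) (Fin r) ℝ) (c : Fin r → ℝ) :
    (U * (V * diagonal c * Vᵀ) * Uᵀ).trace = ∑ i, c i * (Vᵀ i ⬝ᵥ (Uᵀ * U) *ᵥ Vᵀ i) := by
  have h1 : U * (V * diagonal c * Vᵀ) * Uᵀ = (U * V) * diagonal c * (U * V)ᵀ := by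
    simp only [transpose_mul, Matrix.mul_assoc]
  rw [h1, Matrix.trace_mul_comm, ← Matrix.mul_assoc]
  have h2 : ((U * V)ᵀ * (U * V) * diagonal c).trace
      = ∑ i, ((U * V)ᵀ * (U * V)) i i * c i := by
    simp [Matrix.trace, Matrix.diag, Matrix.mul_apply, diagonal, Finset.sum_ite_eq,
      mul_comm]
  rw [h2]
  refine Finset.sum_congr rfl fun i _ => ?_
  have h3 : ((U * V)ᵀ * (U * V)) i i = (U *ᵥ Vᵀ i) ⬝ᵥ (U *ᵥ Vᵀ i) := by
    simp only [Matrix.mul_apply, transpose_apply, dotProduct, Matrix.mulVec]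
  rw [h3, dot_UtU, mul_comm]

variable {r : ℕ}

theorem ext_mulVec {A B : Matrix (Fin r) (Fin r) ℝ}
    (h : ∀ x, A *ᵥ x = B *ᵥ x) : A = B := by
  ext j i
  have := congrFun (h (Pi.single i 1)) j
  simpa [Matrix.mulVec_single] using this

theorem range_mul_le (A B : Matrix (Fin r) (Fin r) ℝ) :
    LinearMap.range (A * B).mulVecLin ≤ LinearMap.range A.mulVecLin := by
  rw [Matrix.mulVecLin_mul]
  exact LinearMap.range_comp_le_range _ _

theorem mem_range_mulVecLin {A : Matrix (Fin r) (Fin r) ℝ} {x : Fin r → ℝ} :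
    x ∈ LinearMap.range A.mulVecLin ↔ ∃ y, A *ᵥ y = x := Iff.rfl

theorem proj_fix {P : Matrix (Fin r) (Fin r) ℝ} (hidem : P * P = P)
    {x : Fin r → ℝ} (hx : x ∈ LinearMap.range P.mulVecLin) : P *ᵥ x = x := by
  obtain ⟨y, hy⟩ := hx
  rw [← hy]
  simp [Matrix.mulVecLin_apply, Matrix.mulVec_mulVec, hidem]

theorem proj_unique {P Q : Matrix (Fin r) (Fin r) ℝ}
    (hPs : Pᵀ = P) (hPi : P * P = P) (hQs : Qᵀ = Q) (hQi : Q * Q = Q)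
    (hr : LinearMap.range P.mulVecLin = LinearMap.range Q.mulVecLin) : P = Q := by
  have h1 : Q * P = P := by
    apply ext_mulVec; intro x
    rw [← Matrix.mulVec_mulVec]
    exact proj_fix hQi (hr ▸ (LinearMap.mem_range_self P.mulVecLin x))
  have h2 : P * Q = Q := by
    apply ext_mulVec; intro x
    rw [← Matrix.mulVec_mulVec]
    exact proj_fix hPi (hr ▸ (LinearMap.mem_range_self Q.mulVecLin x))
  calc P = (Q * P)ᵀ := by rw [h1, hPs]
  _ = P * Q := by rw [transpose_mul, hPs, hQs]
  _ = Q := h2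

variable {r : ℕ}

theorem prod_shift_cancel {a b : Fin r → ℝ}
    (h : ∀ x : ℝ, ∏ i, (x + a i) = ∏ i, (x + b i))
    (hcard : (Finset.univ.filter fun i => a i ≠ 0).card
      = (Finset.univ.filter fun i => b i ≠ 0).card) :
    ∏ i ∈ Finset.univ.filter (fun i => a i ≠ 0), a i
      = ∏ i ∈ Finset.univ.filter (fun i => b i ≠ 0), b i := by
  set f : ℝ → ℝ := fun x => ∏ i ∈ Finset.univ.filter (fun i => a i ≠ 0), (x + a i) with hf
  set g : ℝ → ℝ := fun x => ∏ i ∈ Finset.univ.filter (fun i => b i ≠ 0), (x + b i) with hg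
  have hfa : ∀ x : ℝ, ∏ i, (x + a i)
      = f x * x ^ (Finset.univ.filter fun i => ¬ a i ≠ 0).card := by
    intro x
    rw [← Finset.prod_filter_mul_prod_filter_not Finset.univ (fun i => a i ≠ 0)]
    congr 1
    calc ∏ i ∈ Finset.univ.filter (fun i => ¬ a i ≠ 0), (x + a i)
        = ∏ _i ∈ Finset.univ.filter (fun i => ¬ a i ≠ 0), x :=
          Finset.prod_congr rfl (fun i hi => by
            simp only [Finset.mem_filter, not_not] at hi
            rw [hi.2, add_zero])
      _ = _ := Finset.prod_const x
  have hgb : ∀ x : ℝ, ∏ i, (x + b i)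
      = g x * x ^ (Finset.univ.filter fun i => ¬ b i ≠ 0).card := by
    intro x
    rw [← Finset.prod_filter_mul_prod_filter_not Finset.univ (fun i => b i ≠ 0)]
    congr 1
    calc ∏ i ∈ Finset.univ.filter (fun i => ¬ b i ≠ 0), (x + b i)
        = ∏ _i ∈ Finset.univ.filter (fun i => ¬ b i ≠ 0), x :=
          Finset.prod_congr rfl (fun i hi => by
            simp only [Finset.mem_filter, not_not] at hi
            rw [hi.2, add_zero])
      _ = _ := Finset.prod_const x
  have hzc : (Finset.univ.filter fun i => ¬ a i ≠ 0).card
      = (Finset.univ.filter fun i => ¬ b i ≠ 0).card := by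
    have ha := Finset.card_filter_add_card_filter_not
      (s := (Finset.univ : Finset (Fin r))) (p := fun i => a i ≠ 0)
    have hb := Finset.card_filter_add_card_filter_not
      (s := (Finset.univ : Finset (Fin r))) (p := fun i => b i ≠ 0)
    omega
  have heq : Set.EqOn f g {(0:ℝ)}ᶜ := by
    intro x hx
    have hx0 : (x:ℝ) ≠ 0 := hx
    have := (hfa x).symm.trans ((h x).trans (hgb x))
    rw [hzc] at this
    exact mul_right_cancel₀ (pow_ne_zero _ hx0) this
  have hfc : Continuous f := by
    apply continuous_finset_prod
    intro i _
    exact continuous_id.add continuous_const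
  have hgc : Continuous g := by
    apply continuous_finset_prod
    intro i _
    exact continuous_id.add continuous_const
  have : f = g := Continuous.ext_on (dense_compl_singleton (0:ℝ)) hfc hgc heq
  have h0 := congrFun this 0
  simpa [hf, hg] using h0



theorem det0_eq_prod_filter {M : Matrix (Fin r) (Fin r) ℝ} (hM : M.IsHermitian) :
    det0 M = ∏ i ∈ Finset.univ.filter (fun i => hM.eigenvalues i ≠ 0), hM.eigenvalues i := by
  rw [det0, dif_pos hM, Finset.prod_filter]
  refine Finset.prod_congr rfl fun i _ => ?_
  by_cases h : hM.eigenvalues i = 0 <;> simp [h]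

theorem char_prod {V : Matrix (Fin r) (Fin r) ℝ} (hV : Vᵀ * V = 1) (hV2 : V * Vᵀ = 1)
    (d : Fin r → ℝ) (x : ℝ) :
    det (x • (1 : Matrix (Fin r) (Fin r) ℝ) + V * diagonal d * Vᵀ) = ∏ i, (x + d i) := by
  have h1 : x • (1 : Matrix (Fin r) (Fin r) ℝ) + V * diagonal d * Vᵀ
      = V * diagonal (fun i => x + d i) * Vᵀ := by
    have : (diagonal (fun i => x + d i) : Matrix (Fin r) (Fin r) ℝ)
        = x • 1 + diagonal d := by
      ext i j
      by_cases h : i = j <;> simp [diagonal, Matrix.one_apply, h]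
    rw [this, Matrix.mul_add, Matrix.add_mul]
    congr 1
    rw [Matrix.mul_smul, Matrix.smul_mul, Matrix.mul_one, hV2]
  rw [h1, det_mul, det_mul, mul_comm, ← mul_assoc, ← det_mul, ← det_mul, hV,
    Matrix.one_mul, det_diagonal]

theorem det0_eq_of_decomp {M : Matrix (Fin r) (Fin r) ℝ} (hM : M.IsHermitian)
    {V : Matrix (Fin r) (Fin r) ℝ} {d : Fin r → ℝ}
    (hV : Vᵀ * V = 1) (hV2 : V * Vᵀ = 1) (hdec : M = V * diagonal d * Vᵀ)
    (hcard : (Finset.univ.filter fun i => d i ≠ 0).card = M.rank) :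
    det0 M = ∏ i ∈ Finset.univ.filter (fun i => d i ≠ 0), d i := by
  obtain ⟨W, hW, hW2, hMdec⟩ := spectral_real hM
  have hchar : ∀ x : ℝ, ∏ i, (x + d i) = ∏ i, (x + hM.eigenvalues i) := fun x => by
    rw [← char_prod hV hV2 d x, ← char_prod hW hW2 hM.eigenvalues x, ← hdec, ← hMdec]
  have hcard2 : (Finset.univ.filter fun i => hM.eigenvalues i ≠ 0).card = M.rank := by
    rw [hM.rank_eq_card_non_zero_eigs, Fintype.card_subtype]
  rw [det0_eq_prod_filter hM]
  exact (prod_shift_cancel hchar (hcard.trans hcard2.symm)).symm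

theorem jensen_log {ι : Type*} (t : Finset ι) (p e : ι → ℝ)
    (hp : ∀ i ∈ t, 0 ≤ p i) (hsum : ∑ i ∈ t, p i = 1) (he : ∀ i ∈ t, 0 < e i) :
    ∑ i ∈ t, p i * Real.log (e i) ≤ Real.log (∑ i ∈ t, p i * e i) := by
  have := (strictConcaveOn_log_Ioi.concaveOn).le_map_sum (t := t) (w := p) (p := e)
    hp hsum (fun i hi => he i hi)
  simpa [smul_eq_mul] using this

theorem pt_ineq {N d w : ℝ} (hN : 1 ≤ N) (hd : 0 < d) (hw : 0 < w) :
    -N * Real.log d - w / d ≤ -N * Real.log w + N * Real.log N - N := by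
  have h0 : (0:ℝ) < N := by linarith
  have hx : (0:ℝ) < w / (N * d) := div_pos hw (mul_pos h0 hd)
  have key := Real.log_le_sub_one_of_pos hx
  rw [Real.log_div hw.ne' (mul_pos h0 hd).ne', Real.log_mul h0.ne' hd.ne'] at key
  have key2 : N * (Real.log w - (Real.log N + Real.log d)) ≤ N * (w / (N * d) - 1) :=
    mul_le_mul_of_nonneg_left key h0.le
  have hNd : N * (w / (N * d) - 1) = w / d - N := by field_simp
  rw [hNd] at key2
  nlinarith [key2]

theorem sandwich_mul {r : ℕ} {V : Matrix (Fin r) (Fin r) ℝ} (hV : Vᵀ * V = 1)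
    (a b : Fin r → ℝ) :
    (V * diagonal a * Vᵀ) * (V * diagonal b * Vᵀ) = V * diagonal (a * b) * Vᵀ := by
  simp only [Matrix.mul_assoc]
  rw [← Matrix.mul_assoc Vᵀ V, hV, Matrix.one_mul, ← Matrix.mul_assoc (diagonal a),
    diagonal_mul_diagonal]
  rfl

theorem sandwich_symm {r : ℕ} {V : Matrix (Fin r) (Fin r) ℝ} (a : Fin r → ℝ) :
    (V * diagonal a * Vᵀ)ᵀ = V * diagonal a * Vᵀ := by
  simp [transpose_mul, diagonal_transpose, Matrix.mul_assoc]

/-- the orthogonal projection onto the range of `V * diagonal d * Vᵀ` -/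
theorem proj_works {r : ℕ} {V : Matrix (Fin r) (Fin r) ℝ} (hV : Vᵀ * V = 1)
    (d : Fin r → ℝ) :
    LinearMap.range (V * diagonal (fun i => if d i = 0 then 0 else 1) * Vᵀ).mulVecLin
      = LinearMap.range (V * diagonal d * Vᵀ).mulVecLin := by
  set e : Fin r → ℝ := fun i => if d i = 0 then 0 else 1 with he
  apply le_antisymm
  · have h1 : V * diagonal e * Vᵀ
        = (V * diagonal d * Vᵀ) * (V * diagonal (fun i => if d i = 0 then 0 else (d i)⁻¹) * Vᵀ) := by
      rw [sandwich_mul hV]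
      have : (d * fun i => if d i = 0 then 0 else (d i)⁻¹) = e := by
        funext i
        by_cases h : d i = 0 <;> simp [he, h, Pi.mul_apply] <;> field_simp
      rw [this]
    rw [h1]; exact range_mul_le _ _
  · have h2 : V * diagonal d * Vᵀ = (V * diagonal e * Vᵀ) * (V * diagonal d * Vᵀ) := by
      rw [sandwich_mul hV]
      have : e * d = d := by
        funext i
        by_cases h : d i = 0 <;> simp [he, h, Pi.mul_apply]
      rw [this]
    rw [h2]; exact range_mul_le _ _

theorem l_pieces {n r : ℕ} (U : Matrix (Fin n) (Fin r) ℝ) (P : Matrix (Fin r) (Fin r) ℝ)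
    (hPidem : P * P = P) {B : Matrix (Fin r) (Fin r) ℝ} (hB : B.PosSemidef)
    (hrange : LinearMap.range B.mulVecLin = LinearMap.range P.mulVecLin) :
    ∃ V : Matrix (Fin r) (Fin r) ℝ, Vᵀ * V = 1 ∧ V * Vᵀ = 1 ∧
      B = V * diagonal hB.1.eigenvalues * Vᵀ ∧
      (-(n:ℝ) * Real.log (det0 B) - (U * pinv B * Uᵀ).trace
        = ∑ i ∈ Finset.univ.filter (fun i => hB.1.eigenvalues i ≠ 0),
            (-(n:ℝ) * Real.log (hB.1.eigenvalues i)
              - (Vᵀ i ⬝ᵥ (Uᵀ * U) *ᵥ Vᵀ i) / hB.1.eigenvalues i)) ∧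
      (∀ i, hB.1.eigenvalues i ≠ 0 → P *ᵥ (Vᵀ i) = Vᵀ i) ∧
      (Finset.univ.filter (fun i => hB.1.eigenvalues i ≠ 0)).card = P.rank := by
  obtain ⟨V, hV, hV2, hdec⟩ := spectral_real hB.1
  set d : Fin r → ℝ := hB.1.eigenvalues with hd
  refine ⟨V, hV, hV2, hdec, ?_, ?_, ?_⟩
  · -- the value formula
    have hpinv : pinv B = V * diagonal (fun i => if d i = 0 then 0 else (d i)⁻¹) * Vᵀ := by
      apply pinv_eq
      rw [hdec]
      exact mp_diag hV hV2 d
    have hlog : Real.log (det0 B)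
        = ∑ i ∈ Finset.univ.filter (fun i => d i ≠ 0), Real.log (d i) := by
      rw [det0_eq_prod_filter hB.1, Real.log_prod]
      intro i hi
      exact (Finset.mem_filter.mp hi).2
    have htr : (U * pinv B * Uᵀ).trace
        = ∑ i ∈ Finset.univ.filter (fun i => d i ≠ 0),
            (Vᵀ i ⬝ᵥ (Uᵀ * U) *ᵥ Vᵀ i) / d i := by
      rw [hpinv, trace_sandwich]
      rw [← Finset.sum_filter_of_ne (p := fun i => d i ≠ 0)]
      · refine Finset.sum_congr rfl fun i hi => ?_
        have hi' := (Finset.mem_filter.mp hi).2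
        rw [if_neg hi']
        rw [inv_mul_eq_div]
      · intro i _ hne
        intro h
        apply hne
        rw [if_pos h, zero_mul]
    rw [hlog, htr, Finset.mul_sum, ← Finset.sum_sub_distrib]
  · -- eigenvectors in range P
    intro i hi
    have hBv : B *ᵥ Vᵀ i = d i • Vᵀ i := by
      rw [hdec]; exact sandwich_mulVec_col hV d i
    have hmem : Vᵀ i ∈ LinearMap.range B.mulVecLin := by
      refine ⟨(d i)⁻¹ • Vᵀ i, ?_⟩
      rw [Matrix.mulVecLin_apply, Matrix.mulVec_smul, hBv, smul_smul,
        inv_mul_cancel₀ hi, one_smul]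
    exact proj_fix hPidem (hrange ▸ hmem)
  · -- cardinality
    have h1 : (Finset.univ.filter (fun i => d i ≠ 0)).card = B.rank := by
      rw [hB.1.rank_eq_card_non_zero_eigs, Fintype.card_subtype]
    rw [h1, Matrix.rank, Matrix.rank, hrange]

theorem dot_sandwichP {n r : ℕ} (U : Matrix (Fin n) (Fin r) ℝ) {P : Matrix (Fin r) (Fin r) ℝ}
    (hPsym : Pᵀ = P) (x : Fin r → ℝ) :
    x ⬝ᵥ (P * Uᵀ * U * P) *ᵥ x = (P *ᵥ x) ⬝ᵥ (Uᵀ * U) *ᵥ (P *ᵥ x) := by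
  have h1 : (P * Uᵀ * U * P) *ᵥ x = P *ᵥ ((Uᵀ * U) *ᵥ (P *ᵥ x)) := by
    simp only [← Matrix.mulVec_mulVec, Matrix.mul_assoc]
  rw [h1, Matrix.dotProduct_mulVec x P, ← hPsym, Matrix.vecMul_transpose, hPsym]

theorem range_M {n r : ℕ} (U : Matrix (Fin n) (Fin r) ℝ) {P : Matrix (Fin r) (Fin r) ℝ}
    (hPsym : Pᵀ = P) (hPidem : P * P = P)
    (hpos : ∀ x : Fin r → ℝ, P *ᵥ x ≠ 0 → 0 < P *ᵥ x ⬝ᵥ (Uᵀ * U) *ᵥ (P *ᵥ x)) :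
    LinearMap.range (P * Uᵀ * U * P).mulVecLin = LinearMap.range P.mulVecLin := by
  set M := P * Uᵀ * U * P with hM
  have hle : LinearMap.range M.mulVecLin ≤ LinearMap.range P.mulVecLin := by
    have h : M = P * (Uᵀ * (U * P)) := by simp only [hM, Matrix.mul_assoc]
    rw [h]
    exact range_mul_le _ _
  set T := M.mulVecLin.domRestrict (LinearMap.range P.mulVecLin) with hT
  have hinj : Function.Injective T := by
    rw [← LinearMap.ker_eq_bot, LinearMap.ker_eq_bot']
    rintro ⟨x, hx⟩ h0
    have hMx : M *ᵥ x = 0 := by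
      simpa [hT, LinearMap.domRestrict_apply, Matrix.mulVecLin_apply] using h0
    refine Subtype.ext ?_
    show x = 0
    by_contra hxne
    have hPx : P *ᵥ x = x := proj_fix hPidem hx
    have h3 := dot_sandwichP U hPsym x
    rw [hPx] at h3
    have h4 := hpos x (by rw [hPx]; exact hxne)
    rw [hPx, ← h3, ← hM, hMx] at h4
    simp at h4
  have h2 : LinearMap.range T ≤ LinearMap.range M.mulVecLin := by
    rintro y ⟨⟨x, hx⟩, rfl⟩
    exact ⟨x, rfl⟩
  have h1 : Module.finrank ℝ (LinearMap.range P.mulVecLin)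
      ≤ Module.finrank ℝ (LinearMap.range M.mulVecLin) := by
    rw [← LinearMap.finrank_range_of_inj hinj]
    exact Submodule.finrank_mono h2
  exact Submodule.eq_of_le_of_finrank_le hle h1

/-- Lemma 4.3 of Cook et al. 2010: over positive semidefinite matrices B
with column space equal to range(P), where P is an orthogonal projection of rank k > 0
and P Uᵀ U P is positive definite on range(P), the function
l(B) = −n·log det₀(B) − tr(U B† Uᵀ) is maximized at B* = n⁻¹ P Uᵀ U P, with maximum
value nk·log n − nk − n·log det₀(P Uᵀ U P). -/
theorem cook_lemma_4_3 {n r : ℕ}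
    (U : Matrix (Fin n) (Fin r) ℝ) (P : Matrix (Fin r) (Fin r) ℝ)
    (hPsym : Pᵀ = P) (hPidem : P * P = P) (hk : 0 < P.rank)
    (hpos : ∀ x : Fin r → ℝ, P.mulVec x ≠ 0 →
      0 < P.mulVec x ⬝ᵥ (Uᵀ * U).mulVec (P.mulVec x)) :
    let l : Matrix (Fin r) (Fin r) ℝ → ℝ :=
      fun B => -(n : ℝ) * Real.log (det0 B) - (U * pinv B * Uᵀ).trace
    let Bstar : Matrix (Fin r) (Fin r) ℝ := (n : ℝ)⁻¹ • (P * Uᵀ * U * P)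
    (∀ B : Matrix (Fin r) (Fin r) ℝ, B.PosSemidef →
        LinearMap.range B.mulVecLin = LinearMap.range P.mulVecLin → l B ≤ l Bstar) ∧
    l Bstar = (n : ℝ) * (P.rank : ℝ) * Real.log n - (n : ℝ) * (P.rank : ℝ)
      - (n : ℝ) * Real.log (det0 (P * Uᵀ * U * P)) := by
  intro l Bstar
  have hl : ∀ B, l B = -(n : ℝ) * Real.log (det0 B) - (U * pinv B * Uᵀ).trace := fun _ => rfl
  set M : Matrix (Fin r) (Fin r) ℝ := P * Uᵀ * U * P with hMdef
  have hBstar_def : Bstar = (n : ℝ)⁻¹ • M := rfl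
  clear_value l Bstar
  -- n ≥ 1
  have hPneq : ∃ x : Fin r → ℝ, P *ᵥ x ≠ 0 := by
    by_contra h
    push_neg at h
    have hP0 : P = 0 := ext_mulVec (fun x => by rw [h x]; simp)
    rw [hP0] at hk
    simp [Matrix.rank_zero] at hk
  have hn : 1 ≤ n := by
    by_contra hcon
    have hn0 : n = 0 := by omega
    obtain ⟨x, hx⟩ := hPneq
    have hp := hpos x hx
    subst hn0
    have hU : Uᵀ * U = 0 := by
      ext i j
      simp [Matrix.mul_apply]
    rw [hU] at hp
    simp at hp
  have hn1 : (1:ℝ) ≤ (n:ℝ) := by exact_mod_cast hn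
  have hnpos : (0:ℝ) < (n:ℝ) := by linarith
  have hn0 : (n:ℝ) ≠ 0 := ne_of_gt hnpos
  -- M facts
  have hMrange : LinearMap.range M.mulVecLin = LinearMap.range P.mulVecLin :=
    range_M U hPsym hPidem hpos
  have hMherm : M.IsHermitian := by
    show Mᴴ = M
    have : Mᴴ = Mᵀ := by
      ext i j
      simp [conjTranspose_apply]
    rw [this, hMdef]
    simp only [transpose_mul, transpose_transpose, hPsym]
    simp only [Matrix.mul_assoc]
  have hMpsd : M.PosSemidef := by
    refine posSemidef_iff_dotProduct_mulVec.mpr ⟨hMherm, fun x => ?_⟩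
    have h1 : star x = x := by simp
    rw [h1, hMdef, dot_sandwichP U hPsym x, dot_UtU]
    exact Finset.sum_nonneg fun i _ => mul_self_nonneg _
  have hBstarPSD : Bstar.PosSemidef := by
    refine posSemidef_iff_dotProduct_mulVec.mpr ⟨?_, fun x => ?_⟩
    · show Bstarᴴ = Bstar
      rw [hBstar_def, conjTranspose_smul]
      rw [hMpsd.1.eq]
      congr 1
    · rw [hBstar_def]
      have h1 : star x = x := by simp
      rw [h1]
      have h2 : ((n:ℝ)⁻¹ • M) *ᵥ x = (n:ℝ)⁻¹ • (M *ᵥ x) := by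
        rw [Matrix.smul_mulVec]
      rw [h2, dotProduct_smul]
      have := (posSemidef_iff_dotProduct_mulVec.mp hMpsd).2 x
      rw [show star x = x by simp] at this
      exact mul_nonneg (by positivity) this
  have hBstarRange : LinearMap.range Bstar.mulVecLin = LinearMap.range P.mulVecLin := by
    rw [← hMrange]
    ext y
    constructor
    · rintro ⟨z, rfl⟩
      refine ⟨(n:ℝ)⁻¹ • z, ?_⟩
      simp only [Matrix.mulVecLin_apply, hBstar_def, Matrix.smul_mulVec,
        Matrix.mulVec_smul]
    · rintro ⟨z, rfl⟩
      refine ⟨(n:ℝ) • z, ?_⟩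
      simp only [Matrix.mulVecLin_apply, hBstar_def, Matrix.smul_mulVec,
        Matrix.mulVec_smul]
      rw [smul_smul]
      rw [mul_inv_cancel₀ hn0, one_smul]
  -- spectral pieces for Bstar
  obtain ⟨V, hV, hV2, hdec, hform, hfix, hcard⟩ := l_pieces U P hPidem hBstarPSD hBstarRange
  set d : Fin r → ℝ := hBstarPSD.1.eigenvalues with hd
  set S : Finset (Fin r) := Finset.univ.filter (fun i => d i ≠ 0) with hS
  have hdpos : ∀ i ∈ S, 0 < d i := fun i hi =>
    lt_of_le_of_ne (hBstarPSD.eigenvalues_nonneg i) (Ne.symm (Finset.mem_filter.mp hi).2)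
  -- w_i = n * d i  on S
  have hw : ∀ i ∈ S, Vᵀ i ⬝ᵥ (Uᵀ * U) *ᵥ Vᵀ i = (n:ℝ) * d i := by
    intro i hi
    have hfi := hfix i (Finset.mem_filter.mp hi).2
    have h3 := dot_sandwichP U hPsym (Vᵀ i)
    rw [hfi] at h3
    rw [← h3, ← hMdef]
    have hMv : M *ᵥ Vᵀ i = ((n:ℝ) * d i) • Vᵀ i := by
      have hnB : M = (n:ℝ) • Bstar := by
        rw [hBstar_def, smul_smul, mul_inv_cancel₀ hn0, one_smul]
      rw [hnB, Matrix.smul_mulVec, hdec, sandwich_mulVec_col hV, smul_smul]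
    rw [hMv, dotProduct_smul, smul_eq_mul]
    have := col_dot hV i i
    rw [if_pos rfl] at this
    rw [this, mul_one]
  -- det0 M
  have hMdec : M = V * diagonal (fun i => (n:ℝ) * d i) * Vᵀ := by
    have hnB : M = (n:ℝ) • Bstar := by
      rw [hBstar_def, smul_smul, mul_inv_cancel₀ hn0, one_smul]
    rw [hnB, hdec]
    have hdiag : (diagonal (fun i => (n:ℝ) * d i) : Matrix (Fin r) (Fin r) ℝ)
        = (n:ℝ) • diagonal d := by
      ext i j
      by_cases h : i = j <;> simp [diagonal, h]
    rw [hdiag, Matrix.mul_smul, Matrix.smul_mul]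
  have hkM : M.rank = P.rank := by
    rw [Matrix.rank, Matrix.rank, hMrange]
  have hdet0M : det0 M = ∏ i ∈ S, (n:ℝ) * d i := by
    have hfeq : Finset.univ.filter (fun i => (n:ℝ) * d i ≠ 0) = S := by
      apply Finset.filter_congr
      intro i _
      simp [hn0]
    rw [det0_eq_of_decomp hMherm hV hV2 hMdec (by rw [hfeq, hS, hcard, hkM]), hfeq]
  have hdS : ∀ i ∈ S, d i ≠ 0 := fun i hi => (Finset.mem_filter.mp hi).2
  have hlogM : Real.log (det0 M) = (S.card : ℝ) * Real.log n + ∑ i ∈ S, Real.log (d i) := by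
    rw [hdet0M, Real.log_prod (fun i hi => mul_ne_zero hn0 (hdS i hi))]
    rw [Finset.sum_congr rfl (fun i hi => Real.log_mul hn0 (hdS i hi))]
    rw [Finset.sum_add_distrib, Finset.sum_const, nsmul_eq_mul]
  -- value at Bstar
  have hval : l Bstar = (n : ℝ) * (P.rank : ℝ) * Real.log n - (n : ℝ) * (P.rank : ℝ)
      - (n : ℝ) * Real.log (det0 M) := by
    rw [hl, hform]
    have hsummand : ∀ i ∈ S,
        (-(n:ℝ) * Real.log (d i) - (Vᵀ i ⬝ᵥ (Uᵀ * U) *ᵥ Vᵀ i) / d i)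
        = -(n:ℝ) * Real.log (d i) - (n:ℝ) := by
      intro i hi
      rw [hw i hi, mul_div_assoc, div_self (hdS i hi), mul_one]
    rw [Finset.sum_congr rfl hsummand, Finset.sum_sub_distrib, Finset.sum_const,
      nsmul_eq_mul, ← Finset.mul_sum]
    have hSk : (S.card : ℝ) = (P.rank : ℝ) := by exact_mod_cast congrArg Nat.cast hcard
    have hsum : ∑ i ∈ S, Real.log (d i)
        = Real.log (det0 M) - (P.rank : ℝ) * Real.log n := by
      rw [hlogM, hSk]; ring
    rw [hsum, hSk]
    ring
  refine ⟨?_, hval⟩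
  intro B hB hr
  rw [hval, hl]
  obtain ⟨W, hW, hW2, hdecM, _hformM, hfixM, hcardM⟩ := l_pieces U P hPidem hMpsd hMrange
  set e : Fin r → ℝ := hMpsd.1.eigenvalues with he
  set S0 : Finset (Fin r) := Finset.univ.filter (fun j => e j ≠ 0) with hS0
  have heS : ∀ j ∈ S0, e j ≠ 0 := fun j hj => (Finset.mem_filter.mp hj).2
  have hepos : ∀ j ∈ S0, 0 < e j := fun j hj =>
    lt_of_le_of_ne (hMpsd.eigenvalues_nonneg j) (Ne.symm (heS j hj))
  have hlog0 : Real.log (det0 M) = ∑ j ∈ S0, Real.log (e j) := by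
    rw [det0_eq_prod_filter hMpsd.1, Real.log_prod (fun j hj => heS j hj)]
  obtain ⟨VB, hVB, hVB2, hdecB, hformB, hfixB, hcardB⟩ := l_pieces U P hPidem hB hr
  set dB : Fin r → ℝ := hB.1.eigenvalues with hdB
  set SB : Finset (Fin r) := Finset.univ.filter (fun i => dB i ≠ 0) with hSB
  set w : Fin r → ℝ := fun i => VBᵀ i ⬝ᵥ (Uᵀ * U) *ᵥ VBᵀ i with hwdef
  have hdBS : ∀ i ∈ SB, dB i ≠ 0 := fun i hi => (Finset.mem_filter.mp hi).2
  have hdBpos : ∀ i ∈ SB, 0 < dB i := fun i hi =>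
    lt_of_le_of_ne (hB.eigenvalues_nonneg i) (Ne.symm (hdBS i hi))
  have hvne : ∀ i : Fin r, VBᵀ i ≠ 0 := by
    intro i hvi
    have h := col_dot hVB i i
    rw [if_pos rfl, hvi] at h
    simp at h
  have hwpos : ∀ i ∈ SB, 0 < w i := by
    intro i hi
    have hfi := hfixB i (hdBS i hi)
    have h := hpos (VBᵀ i) (by rw [hfi]; exact hvne i)
    rw [hfi] at h
    exact h
  have step1 : ∑ i ∈ SB, (-(n:ℝ) * Real.log (dB i) - w i / dB i)
      ≤ ∑ i ∈ SB, (-(n:ℝ) * Real.log (w i) + (n:ℝ) * Real.log n - n) :=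
    Finset.sum_le_sum fun i hi => pt_ineq hn1 (hdBpos i hi) (hwpos i hi)
  set q : Fin r → Fin r → ℝ := fun i j => Wᵀ j ⬝ᵥ VBᵀ i with hq
  set ind : (Fin r → ℝ) → Fin r → ℝ := fun f i => if f i = 0 then 0 else 1 with hind
  have hindmul : ∀ f : Fin r → ℝ, ind f * ind f = ind f := by
    intro f
    funext i
    by_cases h : f i = 0 <;> simp [hind, h, Pi.mul_apply]
  have hproj : VB * diagonal (ind dB) * VBᵀ = W * diagonal (ind e) * Wᵀ := by
    apply proj_unique (sandwich_symm _) ?_ (sandwich_symm _) ?_ ?_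
    · rw [sandwich_mul hVB, hindmul]
    · rw [sandwich_mul hW, hindmul]
    · have h1 := proj_works hVB dB
      have h2 := proj_works hW e
      simp only [hind]
      rw [h1, h2, ← hdecB, ← hdecM, hr, hMrange]
  have hwM : ∀ i ∈ SB, w i = ∑ j ∈ S0, e j * (q i j)^2 := by
    intro i hi
    have hfi := hfixB i (hdBS i hi)
    have h3 := dot_sandwichP U hPsym (VBᵀ i)
    rw [hfi] at h3
    have h4 : w i = VBᵀ i ⬝ᵥ M *ᵥ VBᵀ i := h3.symm
    rw [h4, hdecM, quad_form hW]
    rw [← Finset.sum_filter_of_ne (p := fun j => e j ≠ 0)]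
    intro j _ hne hj0
    apply hne
    rw [hj0, zero_mul]
  have hrow : ∀ i ∈ SB, ∑ j ∈ S0, (q i j)^2 = 1 := by
    intro i hi
    have h1 : VBᵀ i ⬝ᵥ (W * diagonal (ind e) * Wᵀ) *ᵥ VBᵀ i = ∑ j ∈ S0, (q i j)^2 := by
      rw [quad_form hW, hS0, Finset.sum_filter]
      refine Finset.sum_congr rfl fun j _ => ?_
      by_cases hj : e j = 0 <;> simp [hind, hj, hq]
    have h2 : VBᵀ i ⬝ᵥ (VB * diagonal (ind dB) * VBᵀ) *ᵥ VBᵀ i = 1 := by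
      rw [sandwich_mulVec_col hVB, dotProduct_smul]
      have hii := col_dot hVB i i
      rw [if_pos rfl] at hii
      rw [hii]
      simp [hind, hdBS i hi]
    rw [← h1, ← hproj, h2]
  have hcol : ∀ j ∈ S0, ∑ i ∈ SB, (q i j)^2 = 1 := by
    intro j hj
    have h1 : Wᵀ j ⬝ᵥ (VB * diagonal (ind dB) * VBᵀ) *ᵥ Wᵀ j = ∑ i ∈ SB, (q i j)^2 := by
      rw [quad_form hVB, hSB, Finset.sum_filter]
      refine Finset.sum_congr rfl fun i _ => ?_
      have hcomm : VBᵀ i ⬝ᵥ Wᵀ j = q i j := dotProduct_comm _ _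
      by_cases hdi : dB i = 0 <;> simp [hind, hdi, hcomm]
    have h2 : Wᵀ j ⬝ᵥ (W * diagonal (ind e) * Wᵀ) *ᵥ Wᵀ j = 1 := by
      rw [sandwich_mulVec_col hW, dotProduct_smul]
      have hjj := col_dot hW j j
      rw [if_pos rfl] at hjj
      rw [hjj]
      simp [hind, heS j hj]
    rw [← h1, hproj, h2]
  have hjensen : ∑ j ∈ S0, Real.log (e j) ≤ ∑ i ∈ SB, Real.log (w i) := by
    have hper : ∀ i ∈ SB, ∑ j ∈ S0, (q i j)^2 * Real.log (e j) ≤ Real.log (w i) := by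
      intro i hi
      have hJ := jensen_log S0 (fun j => (q i j)^2) e (fun j _ => sq_nonneg _)
        (hrow i hi) hepos
      have hre : ∑ j ∈ S0, (q i j)^2 * e j = w i := by
        rw [hwM i hi]
        exact Finset.sum_congr rfl fun j _ => mul_comm _ _
      rwa [hre] at hJ
    calc ∑ j ∈ S0, Real.log (e j)
        = ∑ j ∈ S0, (∑ i ∈ SB, (q i j)^2) * Real.log (e j) := by
          refine Finset.sum_congr rfl fun j hj => ?_
          rw [hcol j hj, one_mul]
      _ = ∑ j ∈ S0, ∑ i ∈ SB, (q i j)^2 * Real.log (e j) := by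
          refine Finset.sum_congr rfl fun j _ => ?_
          rw [Finset.sum_mul]
      _ = ∑ i ∈ SB, ∑ j ∈ S0, (q i j)^2 * Real.log (e j) := Finset.sum_comm
      _ ≤ ∑ i ∈ SB, Real.log (w i) := Finset.sum_le_sum hper
  -- final combination
  have hSBk : (SB.card : ℝ) = (P.rank : ℝ) := by exact_mod_cast congrArg Nat.cast hcardB
  have hstep2 : ∑ i ∈ SB, (-(n:ℝ) * Real.log (w i) + (n:ℝ) * Real.log n - n)
      = -(n:ℝ) * ∑ i ∈ SB, Real.log (w i)
        + (P.rank : ℝ) * ((n:ℝ) * Real.log n) - (P.rank : ℝ) * n := by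
    rw [Finset.sum_sub_distrib, Finset.sum_add_distrib, Finset.sum_const, Finset.sum_const,
      nsmul_eq_mul, nsmul_eq_mul, ← Finset.mul_sum, hSBk]
    try ring
  have hmono : -(n:ℝ) * ∑ i ∈ SB, Real.log (w i) ≤ -(n:ℝ) * ∑ j ∈ S0, Real.log (e j) := by
    have := mul_le_mul_of_nonneg_left hjensen (le_of_lt hnpos)
    linarith
  rw [hformB]
  calc ∑ i ∈ SB, (-(n:ℝ) * Real.log (dB i) - VBᵀ i ⬝ᵥ (Uᵀ * U) *ᵥ VBᵀ i / dB i)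
      ≤ ∑ i ∈ SB, (-(n:ℝ) * Real.log (w i) + (n:ℝ) * Real.log n - n) := step1
    _ = -(n:ℝ) * ∑ i ∈ SB, Real.log (w i)
        + (P.rank : ℝ) * ((n:ℝ) * Real.log n) - (P.rank : ℝ) * n := hstep2
    _ ≤ -(n:ℝ) * ∑ j ∈ S0, Real.log (e j)
        + (P.rank : ℝ) * ((n:ℝ) * Real.log n) - (P.rank : ℝ) * n := by linarith
    _ = (n : ℝ) * (P.rank : ℝ) * Real.log n - (n : ℝ) * (P.rank : ℝ)
        - (n : ℝ) * Real.log (det0 M) := by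
        rw [hlog0]
        ring
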